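/- (Spatial difference bound) Let t > 0, u(t,·) Schwartz, φ(t,x) = x²/(4t), and γ(t,v) = ∫ u(t,x) e^{−iφ(t,x)} conj(χ((x−vt)/√t)) dx with χ Schwartz, ∫χ = 1. Then sup_v |u(t,vt) − t^{−1/2} e^{iφ(t,vt)} γ(t,v)| ≤ C t^{−3/4} ‖Lu(t)‖_{L²_x}, where Lu = xu + 2it∂ₓu. -/

import Mathlib

open Complex MeasureTheory

/-- The asymptotic profile `γ(t,v) = ∫ u(x) e^{−ix²/(4t)} conj(χ((x−vt)/√t)) dx`. -/
noncomputable def asymProfile (χ : SchwartzMap ℝ ℂ) (u : ℝ → ℂ) (t v : ℝ) : ℂ :=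
  ∫ x : ℝ, u x * Complex.exp (-I * (x : ℂ) ^ 2 / (4 * (t : ℂ))) *
    (starRingEnd ℂ) (χ ((x - v * t) / Real.sqrt t))

lemma norm_exp_real_mul_I' (r : ℝ) : ‖Complex.exp ((r : ℂ) * I)‖ = 1 := by
  simpa using Complex.abs_exp_ofReal_mul_I r

/-- The operator `L u = x u + 2 i t u'` as a Schwartz map. -/
noncomputable def Lop (t : ℝ) (u : SchwartzMap ℝ ℂ) : SchwartzMap ℝ ℂ :=
  SchwartzMap.bilinLeftCLM ((ContinuousLinearMap.mul ℝ ℂ).flip)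
    Complex.ofRealCLM.hasTemperateGrowth u
  + (2 * I * (t : ℂ)) • SchwartzMap.derivCLM ℝ ℂ u

lemma Lop_apply (t : ℝ) (u : SchwartzMap ℝ ℂ) (x : ℝ) :
    Lop t u x = (x : ℂ) * u x + 2 * I * (t : ℂ) * deriv u x := by
  simp only [Lop, SchwartzMap.add_apply, SchwartzMap.smul_apply, SchwartzMap.derivCLM_apply,
    smul_eq_mul]
  try congr 1
  try rfl

/-- Cauchy–Schwarz on `uIoc`. -/
lemma cs_uIoc (h : ℝ → ℝ) (hcont : Continuous h) (hnn : ∀ x, 0 ≤ h x)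
    (hint : Integrable (fun x => h x ^ 2)) (a b : ℝ) :
    ∫ x in Set.uIoc a b, h x ≤
      |b - a| ^ ((1 : ℝ) / 2) * (∫ x, h x ^ 2) ^ ((1 : ℝ) / 2) := by
  rw [Set.uIoc]
  set s : Set ℝ := Set.Ioc (a ⊓ b) (a ⊔ b) with hs
  have hpq : Real.HolderConjugate 2 2 := Real.HolderConjugate.two_two
  have hfm : MemLp h (ENNReal.ofReal 2) (volume.restrict s) := by
    have h2 : (ENNReal.ofReal 2) = 2 := by
      rw [ENNReal.ofReal_ofNat]
    rw [h2]
    exact ((memLp_two_iff_integrable_sq hcont.aestronglyMeasurable.restrict).mpr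
      hint.restrict)
  have hgm : MemLp (fun _ : ℝ => (1 : ℝ)) (ENNReal.ofReal 2) (volume.restrict s) :=
    memLp_const 1
  have H := integral_mul_le_Lp_mul_Lq_of_nonneg hpq
    (Filter.Eventually.of_forall fun x => hnn x)
    (Filter.Eventually.of_forall fun _ => zero_le_one) hfm hgm
  simp only [mul_one] at H
  have hsq : ∀ x : ℝ, h x ^ (2 : ℝ) = h x ^ 2 := fun x => by
    rw [show (2 : ℝ) = ((2 : ℕ) : ℝ) by norm_num, Real.rpow_natCast]
  simp only [hsq, Real.one_rpow] at H
  have hvol : ∫ _x in s, (1 : ℝ) = |b - a| := by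
    rw [setIntegral_const, smul_eq_mul, mul_one, hs, Real.volume_real_Ioc_of_le min_le_max]
    rw [max_sub_min_eq_abs, abs_sub_comm]
  rw [hvol] at H
  refine H.trans ?_
  rw [mul_comm]
  have h1 : (∫ x in s, h x ^ 2) ^ ((1 : ℝ) / 2) ≤ (∫ x, h x ^ 2) ^ ((1 : ℝ) / 2) :=
    Real.rpow_le_rpow (integral_nonneg fun x => sq_nonneg _)
      (setIntegral_le_integral hint (Filter.Eventually.of_forall fun x => sq_nonneg _))
      (by norm_num)
  exact mul_le_mul_of_nonneg_left h1 (Real.rpow_nonneg (abs_nonneg _) _)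

/-- Spatial difference bound:
`sup_v |u(vt) − t^{−1/2} e^{iφ(t,vt)} γ(t,v)| ≤ C t^{−3/4} ‖Lu‖_{L²}`,
where `φ(t,x) = x²/(4t)` and `Lu = xu + 2it∂ₓu`, `C` depending only on `χ`. -/
theorem spatial_difference_bound (χ : SchwartzMap ℝ ℂ) (hχ : (∫ y : ℝ, χ y) = 1) :
    ∃ C : ℝ, 0 < C ∧ ∀ (t : ℝ), 0 < t → ∀ u : SchwartzMap ℝ ℂ, ∀ v : ℝ,
      ‖u (v * t) - ((t : ℝ) ^ (-(1 / 2 : ℝ)) : ℝ) *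
          Complex.exp (I * ((v * t : ℝ) : ℂ) ^ 2 / (4 * (t : ℂ))) *
          asymProfile χ (fun x => u x) t v‖ ≤
        C * t ^ (-(3 / 4 : ℝ)) *
          (∫ x : ℝ, ‖(x : ℂ) * u x + 2 * I * (t : ℂ) * deriv u x‖ ^ 2) ^ ((1 : ℝ) / 2) := by
  classical
  -- the constant
  set K : ℝ := ∫ y : ℝ, Real.sqrt |y| * ‖χ y‖ with hK
  have hKint : Integrable (fun y : ℝ => Real.sqrt |y| * ‖χ y‖) := by
    have h1 : Integrable (fun y : ℝ => ‖χ y‖ + ‖y‖ ^ 1 * ‖χ y‖) :=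
      χ.integrable.norm.add (χ.integrable_pow_mul volume 1)
    refine h1.mono' ?_ (Filter.Eventually.of_forall fun y => ?_)
    · exact ((Real.continuous_sqrt.comp (_root_.continuous_abs)).mul
        χ.continuous.norm).aestronglyMeasurable
    · have h2 : Real.sqrt |y| ≤ 1 + |y| := by
        have hs := Real.sq_sqrt (abs_nonneg y)
        have hsn := Real.sqrt_nonneg (|y|)
        nlinarith [sq_nonneg (Real.sqrt |y| - 1)]
      have h3 : 0 ≤ Real.sqrt |y| * ‖χ y‖ := by positivity
      rw [Real.norm_of_nonneg h3]
      calc Real.sqrt |y| * ‖χ y‖ ≤ (1 + |y|) * ‖χ y‖ := by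
            exact mul_le_mul_of_nonneg_right h2 (norm_nonneg _)
        _ = ‖χ y‖ + |y| * ‖χ y‖ := by ring
        _ = ‖χ y‖ + ‖y‖ ^ 1 * ‖χ y‖ := by rw [Real.norm_eq_abs, pow_one]
  have hKnn : 0 ≤ K := integral_nonneg fun y => by positivity
  refine ⟨K / 2 + 1, by positivity, ?_⟩
  intro t ht u v
  have htR : (t : ℂ) ≠ 0 := by exact_mod_cast ne_of_gt ht
  have hst : Real.sqrt t ≠ 0 := by positivity
  -- notation
  set c : ℂ := -I / (4 * (t : ℂ)) with hc
  set E : ℝ → ℂ := fun x => Complex.exp (-I * (x : ℂ) ^ 2 / (4 * (t : ℂ))) with hE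
  set g : ℝ → ℂ := fun x => u x * E x with hg
  set L : ℝ → ℂ := fun x => (x : ℂ) * u x + 2 * I * (t : ℂ) * deriv u x with hL
  set M : ℝ := (∫ x : ℝ, ‖L x‖ ^ 2) ^ ((1 : ℝ) / 2) with hM
  have hLop : ∀ x, Lop t u x = L x := fun x => Lop_apply t u x
  have hLcont : Continuous L := by
    have h := (Lop t u).continuous
    have he : ⇑(Lop t u) = L := funext hLop
    rw [he] at h; exact h
  have hLnormint : Integrable (fun x : ℝ => ‖L x‖ ^ 2) := by
    have hb : ∃ B : ℝ, ∀ x, ‖L x‖ ≤ B :=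
      ⟨(SchwartzMap.seminorm ℝ 0 0) (Lop t u), fun x => by
        rw [← hLop]; exact SchwartzMap.norm_le_seminorm ℝ (Lop t u) x⟩
    obtain ⟨B, hB⟩ := hb
    have hint : Integrable (fun x : ℝ => B * ‖Lop t u x‖) :=
      (Lop t u).integrable.norm.const_mul B
    refine hint.mono' ?_ (Filter.Eventually.of_forall fun x => ?_)
    · exact (hLcont.norm.pow 2).aestronglyMeasurable
    · have h5 : ‖Lop t u x‖ = ‖L x‖ := by rw [hLop]
      rw [Real.norm_of_nonneg (by positivity), h5, pow_two]
      exact mul_le_mul_of_nonneg_right (hB x) (norm_nonneg _)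
  have hMnn : 0 ≤ M := Real.rpow_nonneg (integral_nonneg fun x => by positivity) _
  -- norm of E
  have hEnorm : ∀ x : ℝ, ‖E x‖ = 1 := by
    intro x
    have : -I * (x : ℂ) ^ 2 / (4 * (t : ℂ)) = ((-(x ^ 2) / (4 * t) : ℝ) : ℂ) * I := by
      push_cast; ring
    rw [hE]; simp only [this]; exact norm_exp_real_mul_I' _
  -- derivative of g
  have hEeq : ∀ x : ℝ, E x = Complex.exp (c * (x : ℂ) ^ 2) := by
    intro x
    show Complex.exp (-I * (x : ℂ) ^ 2 / (4 * (t : ℂ))) = Complex.exp (c * (x : ℂ) ^ 2)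
    rw [hc]
    congr 1
    ring
  have hEderiv : ∀ x : ℝ, HasDerivAt E (c * (2 * x) * E x) x := by
    intro x
    have h1 : HasDerivAt (fun z : ℂ => c * z ^ 2) (c * (2 * (x : ℂ))) (x : ℂ) := by
      simpa using ((hasDerivAt_pow 2 (x : ℂ)).const_mul c)
    have h2 : HasDerivAt (fun z : ℂ => Complex.exp (c * z ^ 2))
        (Complex.exp (c * (x : ℂ) ^ 2) * (c * (2 * (x : ℂ)))) (x : ℂ) := h1.cexp
    have h3 := h2.comp_ofReal
    have h4 : E = fun y : ℝ => Complex.exp (c * (y : ℂ) ^ 2) := funext fun y => hEeq y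
    rw [h4]
    simpa [mul_comm] using h3
  have hgderiv : ∀ x : ℝ, HasDerivAt g ((2 * I * (t : ℂ))⁻¹ * L x * E x) x := by
    intro x
    have hu : HasDerivAt (fun y : ℝ => u y) (deriv u x) x :=
      u.differentiableAt.hasDerivAt
    have := hu.mul (hEderiv x)
    refine HasDerivAt.congr_deriv this ?_
    rw [hL, hc]
    have h2It : (2 * I * (t : ℂ)) ≠ 0 := by
      simp [Complex.I_ne_zero, htR]
    field_simp
    linear_combination (-4 * (x : ℂ) * u x * E x) * Complex.I_sq
  have hEcont : Continuous E :=
    Complex.continuous_exp.comp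
      ((continuous_const.mul (Complex.continuous_ofReal.pow 2)).div_const _)
  have hgcont : Continuous g := u.continuous.mul hEcont
  -- key pointwise bound
  have key : ∀ a b : ℝ, ‖g b - g a‖ ≤ Real.sqrt |b - a| * ((2 * t)⁻¹ * M) := by
    intro a b
    have hDcont : Continuous fun x => (2 * I * (t : ℂ))⁻¹ * L x * E x :=
      (continuous_const.mul hLcont).mul hEcont
    have hftc : ∫ x in a..b, (2 * I * (t : ℂ))⁻¹ * L x * E x = g b - g a :=
      intervalIntegral.integral_eq_sub_of_hasDerivAt (fun x _ => hgderiv x)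
        (hDcont.intervalIntegrable a b)
    have hnrm : ∀ x : ℝ, ‖(2 * I * (t : ℂ))⁻¹ * L x * E x‖ = (2 * t)⁻¹ * ‖L x‖ := by
      intro x
      rw [norm_mul, norm_mul, hEnorm, mul_one, norm_inv]
      congr 1
      rw [norm_mul, norm_mul, Complex.norm_I, mul_one]
      rw [show ‖(2 : ℂ)‖ = 2 from by norm_num,
        show ‖((t : ℝ) : ℂ)‖ = t from by
          rw [Complex.norm_real, Real.norm_eq_abs, abs_of_pos ht]]
    calc ‖g b - g a‖ = ‖∫ x in a..b, (2 * I * (t : ℂ))⁻¹ * L x * E x‖ := by rw [hftc]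
      _ ≤ ∫ x in Set.uIoc a b, ‖(2 * I * (t : ℂ))⁻¹ * L x * E x‖ :=
          intervalIntegral.norm_integral_le_integral_norm_uIoc
      _ = ∫ x in Set.uIoc a b, (2 * t)⁻¹ * ‖L x‖ := by
          apply setIntegral_congr_fun measurableSet_uIoc
          intro x _; exact hnrm x
      _ = (2 * t)⁻¹ * ∫ x in Set.uIoc a b, ‖L x‖ := by
          rw [integral_const_mul]
      _ ≤ (2 * t)⁻¹ * (|b - a| ^ ((1 : ℝ) / 2) * M) := by
          apply mul_le_mul_of_nonneg_left _ (by positivity)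
          rw [hM]
          exact cs_uIoc (fun x => ‖L x‖) hLcont.norm (fun x => norm_nonneg _) hLnormint a b
      _ = Real.sqrt |b - a| * ((2 * t)⁻¹ * M) := by
          rw [Real.sqrt_eq_rpow]; ring
  -- the substitution
  set F : ℝ → ℂ := fun x => g x * (starRingEnd ℂ) (χ ((x - v * t) / Real.sqrt t)) with hF
  have hprofile : asymProfile χ (fun x => u x) t v = ∫ x : ℝ, F x := by
    rw [asymProfile]
  have hsub : ∫ y : ℝ, F (Real.sqrt t * y + v * t) = (Real.sqrt t)⁻¹ • ∫ x : ℝ, F x := by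
    calc ∫ y : ℝ, F (Real.sqrt t * y + v * t)
        = |(Real.sqrt t)⁻¹| • ∫ z : ℝ, F (z + v * t) :=
          MeasureTheory.Measure.integral_comp_mul_left (fun z => F (z + v * t)) (Real.sqrt t)
      _ = |(Real.sqrt t)⁻¹| • ∫ z : ℝ, F z := by
          congr 1
          exact integral_add_right_eq_self (fun z => F z) (v * t)
      _ = (Real.sqrt t)⁻¹ • ∫ x : ℝ, F x := by
          rw [_root_.abs_of_nonneg (inv_nonneg.mpr (Real.sqrt_nonneg t))]
  have hFy : ∀ y : ℝ, F (Real.sqrt t * y + v * t) = g (v * t + Real.sqrt t * y)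
      * (starRingEnd ℂ) (χ y) := by
    intro y
    have hq : (Real.sqrt t * y + v * t - v * t) / Real.sqrt t = y := by
      field_simp
      ring
    show g (Real.sqrt t * y + v * t) *
        (starRingEnd ℂ) (χ ((Real.sqrt t * y + v * t - v * t) / Real.sqrt t)) = _
    rw [hq, add_comm (Real.sqrt t * y) (v * t)]
  -- conj χ integrates to 1
  have hχconj : (∫ y : ℝ, (starRingEnd ℂ) (χ y)) = 1 := by
    rw [integral_conj, hχ, map_one]
  have hgvt : g (v * t) = ∫ y : ℝ, g (v * t) * (starRingEnd ℂ) (χ y) := by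
    rw [integral_const_mul, hχconj, mul_one]
  -- integrability facts
  have hconjcont : Continuous fun y : ℝ => (starRingEnd ℂ) (χ y) :=
    continuous_star.comp χ.continuous
  have hχconjint : Integrable (fun y : ℝ => (starRingEnd ℂ) (χ y)) := by
    refine χ.integrable.norm.mono' hconjcont.aestronglyMeasurable
      (Filter.Eventually.of_forall fun y => ?_)
    exact le_of_eq (norm_star _)
  have hubdd : ∃ B : ℝ, ∀ x : ℝ, ‖g x‖ ≤ B := by
    refine ⟨(SchwartzMap.seminorm ℝ 0 0) u, fun x => ?_⟩
    rw [hg]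
    calc ‖u x * E x‖ = ‖u x‖ := by rw [norm_mul, hEnorm, mul_one]
      _ ≤ _ := SchwartzMap.norm_le_seminorm ℝ u x
  have I1 : Integrable (fun y : ℝ => g (v * t) * (starRingEnd ℂ) (χ y)) :=
    hχconjint.const_mul _
  have I2 : Integrable (fun y : ℝ => g (v * t + Real.sqrt t * y) * (starRingEnd ℂ) (χ y)) := by
    obtain ⟨B, hB⟩ := hubdd
    refine Integrable.bdd_mul (c := B) hχconjint ?_ ?_
    · exact (hgcont.comp
        (continuous_const.add (continuous_const.mul continuous_id))).aestronglyMeasurable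
    · exact Filter.Eventually.of_forall fun y => hB _
  -- difference identity
  have hdiff : g (v * t) - (Real.sqrt t)⁻¹ • (∫ x : ℝ, F x)
      = ∫ y : ℝ, (g (v * t) - g (v * t + Real.sqrt t * y)) * (starRingEnd ℂ) (χ y) := by
    have h1 : ∀ y : ℝ, (g (v * t) - g (v * t + Real.sqrt t * y)) * (starRingEnd ℂ) (χ y)
        = g (v * t) * (starRingEnd ℂ) (χ y)
          - g (v * t + Real.sqrt t * y) * (starRingEnd ℂ) (χ y) := fun y => by ring
    simp only [h1]
    rw [integral_sub I1 I2, ← hgvt]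
    congr 1
    rw [← hsub]
    apply integral_congr_ae
    filter_upwards with y
    rw [hFy y]
  -- bound the difference
  have hdiffbound : ‖g (v * t) - (Real.sqrt t)⁻¹ • (∫ x : ℝ, F x)‖
      ≤ Real.sqrt (Real.sqrt t) * ((2 * t)⁻¹ * M) * K := by
    rw [hdiff]
    calc ‖∫ y : ℝ, (g (v * t) - g (v * t + Real.sqrt t * y)) * (starRingEnd ℂ) (χ y)‖
        ≤ ∫ y : ℝ, ‖(g (v * t) - g (v * t + Real.sqrt t * y)) * (starRingEnd ℂ) (χ y)‖ :=
          norm_integral_le_integral_norm _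
      _ ≤ ∫ y : ℝ, Real.sqrt (Real.sqrt t) * ((2 * t)⁻¹ * M) * (Real.sqrt |y| * ‖χ y‖) := by
          refine integral_mono_of_nonneg (Filter.Eventually.of_forall fun y => norm_nonneg _)
            (hKint.const_mul _) (Filter.Eventually.of_forall fun y => ?_)
          show ‖(g (v * t) - g (v * t + Real.sqrt t * y)) * (starRingEnd ℂ) (χ y)‖
            ≤ Real.sqrt (Real.sqrt t) * ((2 * t)⁻¹ * M) * (Real.sqrt |y| * ‖χ y‖)
          rw [norm_mul]
          have hconj : ‖(starRingEnd ℂ) (χ y)‖ = ‖χ y‖ := by simp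
          rw [hconj]
          have h2 : ‖g (v * t) - g (v * t + Real.sqrt t * y)‖
              ≤ Real.sqrt (Real.sqrt t) * Real.sqrt |y| * ((2 * t)⁻¹ * M) := by
            have h3 := key (v * t + Real.sqrt t * y) (v * t)
            have h4 : |v * t - (v * t + Real.sqrt t * y)| = Real.sqrt t * |y| := by
              rw [show v * t - (v * t + Real.sqrt t * y) = -(Real.sqrt t * y) by ring,
                _root_.abs_neg, _root_.abs_mul, _root_.abs_of_nonneg (Real.sqrt_nonneg t)]
            rw [h4] at h3
            rwa [Real.sqrt_mul (Real.sqrt_nonneg t)] at h3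
          calc ‖g (v * t) - g (v * t + Real.sqrt t * y)‖ * ‖χ y‖
              ≤ (Real.sqrt (Real.sqrt t) * Real.sqrt |y| * ((2 * t)⁻¹ * M)) * ‖χ y‖ :=
                mul_le_mul_of_nonneg_right h2 (norm_nonneg _)
            _ = Real.sqrt (Real.sqrt t) * ((2 * t)⁻¹ * M) * (Real.sqrt |y| * ‖χ y‖) := by
                ring
      _ = Real.sqrt (Real.sqrt t) * ((2 * t)⁻¹ * M) * K := by
          rw [integral_const_mul, hK]
  -- reduce the LHS
  set P : ℂ := I * ((v * t : ℝ) : ℂ) ^ 2 / (4 * (t : ℂ)) with hP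
  have hrpow_half : ((t : ℝ) ^ (-(1 / 2 : ℝ)) : ℝ) = (Real.sqrt t)⁻¹ := by
    rw [Real.rpow_neg ht.le, Real.sqrt_eq_rpow]
  have hexpP : Complex.exp P * E (v * t) = 1 := by
    have : -I * ((v * t : ℝ) : ℂ) ^ 2 / (4 * (t : ℂ)) = -P := by rw [hP]; ring
    rw [hE]
    simp only [this]
    rw [← Complex.exp_add, add_neg_cancel, Complex.exp_zero]
  have hPnorm : ‖Complex.exp P‖ = 1 := by
    have : P = (((v * t) ^ 2 / (4 * t) : ℝ) : ℂ) * I := by rw [hP]; push_cast; ring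
    rw [this]
    exact norm_exp_real_mul_I' _
  have hLHS : u (v * t) - ((t : ℝ) ^ (-(1 / 2 : ℝ)) : ℝ) * Complex.exp P
        * asymProfile χ (fun x => u x) t v
      = Complex.exp P * (g (v * t) - (Real.sqrt t)⁻¹ • (∫ x : ℝ, F x)) := by
    rw [hprofile, hrpow_half]
    rw [mul_sub]
    congr 1
    · rw [hg]
      calc (u (v * t) : ℂ) = u (v * t) * 1 := by rw [mul_one]
        _ = u (v * t) * (Complex.exp P * E (v * t)) := by rw [hexpP]
        _ = Complex.exp P * (u (v * t) * E (v * t)) := by ring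
    · rw [Complex.real_smul]
      push_cast
      ring
  rw [hLHS, norm_mul, hPnorm, one_mul]
  -- final arithmetic
  refine hdiffbound.trans ?_
  have h14 : Real.sqrt (Real.sqrt t) = t ^ ((1 : ℝ) / 4) := by
    rw [Real.sqrt_eq_rpow, Real.sqrt_eq_rpow, ← Real.rpow_mul ht.le]
    norm_num
  have h34 : t ^ ((1 : ℝ) / 4) * (2 * t)⁻¹ = 2⁻¹ * t ^ (-(3 / 4 : ℝ)) := by
    rw [mul_inv, show (t : ℝ)⁻¹ = t ^ (-1 : ℝ) by rw [Real.rpow_neg_one]]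
    rw [show t ^ ((1:ℝ)/4) * (2⁻¹ * t ^ (-1:ℝ)) = 2⁻¹ * (t ^ ((1:ℝ)/4) * t ^ (-1:ℝ)) by ring]
    rw [← Real.rpow_add ht]
    norm_num
  have heq : Real.sqrt (Real.sqrt t) * ((2 * t)⁻¹ * M) * K
      = (K / 2) * t ^ (-(3 / 4 : ℝ)) * M := by
    rw [h14]
    rw [show t ^ ((1:ℝ)/4) * ((2 * t)⁻¹ * M) * K = (t ^ ((1:ℝ)/4) * (2*t)⁻¹) * M * K by ring,
      h34]
    ring
  rw [heq]
  have htM : 0 ≤ t ^ (-(3 / 4 : ℝ)) * M :=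
    mul_nonneg (Real.rpow_nonneg ht.le _) hMnn
  nlinarith [htM]
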